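/- Let F be a finite field, V a nonzero finite-dimensional vector space over F, and R a subgroup of GL(V) acting irreducibly on V, i.e., the only R-invariant F-subspaces of V are 0 and V. Then the centralizer of R in GL(V) is a cyclic group. -/
import Mathlib


/-- If `R` is a subgroup of `GL(V)` acting irreducibly on the nonzero finite-dimensional
vector space `V` over the finite field `F`, then the centralizer of `R` in `GL(V)`
is cyclic. -/
theorem centralizer_of_irreducible_isCyclic
    (F V : Type*) [Field F] [Finite F] [AddCommGroup V] [Module F V]
    [FiniteDimensional F V] [Nontrivial V]
    (R : Subgroup (LinearMap.GeneralLinearGroup F V))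
    (hirr : ∀ W : Submodule F V,
      (∀ r ∈ R, ∀ v ∈ W, (r : V →ₗ[F] V) v ∈ W) → W = ⊥ ∨ W = ⊤) :
    IsCyclic (Subgroup.centralizer (R : Set (LinearMap.GeneralLinearGroup F V))) := by
  classical
  have hVfin : Finite V := Module.finite_of_finite F
  have hEfin : Finite (V →ₗ[F] V) :=
    Finite.of_injective (fun f => (f : V → V)) (by intro f g h; exact LinearMap.coe_injective h)
  -- the centralizer subalgebra
  set S : Set (Module.End F V) :=
    (fun r : LinearMap.GeneralLinearGroup F V => (r : V →ₗ[F] V)) '' (R : Set _) with hS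
  set D : Subalgebra F (Module.End F V) := Subalgebra.centralizer F S with hD
  have hDfin : Finite D := Subtype.finite
  -- Schur: nonzero elements of D are injective
  have schur : ∀ f : Module.End F V, f ∈ D → f ≠ 0 → Function.Injective f := by
    intro f hf hf0
    have hker : LinearMap.ker f = ⊥ ∨ LinearMap.ker f = ⊤ := by
      apply hirr
      intro r hr v hv
      have hcomm : (r : V →ₗ[F] V) * f = f * (r : V →ₗ[F] V) :=
        Subalgebra.mem_centralizer_iff F |>.mp hf _ ⟨r, hr, rfl⟩
      have : f ((r : V →ₗ[F] V) v) = (r : V →ₗ[F] V) (f v) := by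
        have := congrArg (fun g : Module.End F V => g v) hcomm.symm
        simpa using this
      simp only [LinearMap.mem_ker] at hv ⊢
      rw [this, hv, map_zero]
    rcases hker with h | h
    · exact LinearMap.ker_eq_bot.mp h
    · exact absurd (LinearMap.ker_eq_top.mp h) hf0
  haveI : Nontrivial D := by
    refine ⟨0, 1, fun h => ?_⟩
    obtain ⟨v, hv⟩ := exists_ne (0 : V)
    have := congrArg (fun g : D => (g : Module.End F V) v) h
    simp at this
    exact hv this.symm
  haveI : NoZeroDivisors D := by
    constructor
    intro a b hab
    by_cases ha : a = 0
    · exact Or.inl ha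
    · right
      have hinj : Function.Injective (a : Module.End F V) :=
        schur a a.2 (fun h => ha (Subtype.ext h))
      have : ∀ v, (a : Module.End F V) ((b : Module.End F V) v) = (a : Module.End F V) 0 := by
        intro v
        have := congrArg (fun g : D => (g : Module.End F V) v) hab
        simpa using this
      ext v
      have := hinj (this v)
      simpa using this
  haveI : IsDomain D := NoZeroDivisors.to_isDomain D
  have hfield : IsField D := Finite.isDomain_to_isField D
  letI : Field D := hfield.toField
  -- embed the centralizer into D
  have hmem : ∀ g : Subgroup.centralizer (R : Set (LinearMap.GeneralLinearGroup F V)),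
      ((g : LinearMap.GeneralLinearGroup F V) : V →ₗ[F] V) ∈ D := by
    intro g
    rw [hD, Subalgebra.mem_centralizer_iff]
    rintro _ ⟨r, hr, rfl⟩
    have := g.2 r hr
    exact congrArg Units.val this
  let φ : Subgroup.centralizer (R : Set (LinearMap.GeneralLinearGroup F V)) →* D :=
    { toFun := fun g => ⟨_, hmem g⟩
      map_one' := rfl
      map_mul' := fun g h => rfl }
  have hinj : Function.Injective φ := by
    intro g h hgh
    have : ((g : LinearMap.GeneralLinearGroup F V) : V →ₗ[F] V)
        = ((h : LinearMap.GeneralLinearGroup F V) : V →ₗ[F] V) := congrArg Subtype.val hgh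
    exact Subtype.ext (Units.ext this)
  exact isCyclic_of_subgroup_isDomain φ hinj
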